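/- Let R be an equivalence relation on a finite nonempty set U and M*(R) the dual of the matroid induced by the lower approximation operator. For every x ∈ U and every X ⊆ U \ [x]_R, the ranks agree: r_{M*(R)/{x}}(X) = r_{M*(R)/[x]_R}(X). -/

import Mathlib

/-- The rank function of the dual matroid `M*(R)`: the maximum cardinality of a
partial transversal of the classes of `R` contained in `A`. -/
noncomputable def rkDual {U : Type*} (R : U → U → Prop) (A : Set U) : ℕ :=
  sSup {n : ℕ | ∃ I ⊆ A, (∀ y : U, ({z : U | R y z} ∩ I).ncard ≤ 1) ∧ I.ncard = n}

section Helpers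

variable {U : Type*} [Fintype U] {R : U → U → Prop}

lemma rkS_bdd (A : Set U) :
    BddAbove {n : ℕ | ∃ I ⊆ A, (∀ y : U, ({z : U | R y z} ∩ I).ncard ≤ 1) ∧ I.ncard = n} := by
  refine ⟨(Set.univ : Set U).ncard, ?_⟩
  rintro n ⟨I, -, -, rfl⟩
  exact Set.ncard_le_ncard (Set.subset_univ I) (Set.toFinite _)

omit [Fintype U] in
lemma rkS_nonempty (A : Set U) :
    {n : ℕ | ∃ I ⊆ A, (∀ y : U, ({z : U | R y z} ∩ I).ncard ≤ 1) ∧ I.ncard = n}.Nonempty := by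
  exact ⟨0, ∅, Set.empty_subset _, by simp, by simp⟩

lemma le_rkDual {A : Set U} {I : Set U} (hIA : I ⊆ A)
    (hI : ∀ y : U, ({z : U | R y z} ∩ I).ncard ≤ 1) : I.ncard ≤ rkDual R A :=
  le_csSup (rkS_bdd A) ⟨I, hIA, hI, rfl⟩

omit [Fintype U] in
lemma rkDual_le {A : Set U} {m : ℕ}
    (h : ∀ I ⊆ A, (∀ y : U, ({z : U | R y z} ∩ I).ncard ≤ 1) → I.ncard ≤ m) :
    rkDual R A ≤ m := by
  refine csSup_le (rkS_nonempty A) ?_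
  rintro n ⟨I, hIA, hI, rfl⟩
  exact h I hIA hI

lemma rkDual_mono {A B : Set U} (h : A ⊆ B) : rkDual R A ≤ rkDual R B := by
  refine rkDual_le fun I hIA hI => le_rkDual (hIA.trans h) hI

lemma rkDual_singleton_of_refl (hx : R x x) : rkDual R ({x} : Set U) = 1 := by
  refine le_antisymm (rkDual_le fun I hIA _ => ?_) ?_
  · simpa using Set.ncard_le_ncard hIA (Set.toFinite _)
  · have h1 : ∀ y : U, ({z : U | R y z} ∩ ({x} : Set U)).ncard ≤ 1 := fun y => by
      have hsub : {z : U | R y z} ∩ ({x} : Set U) ⊆ ({x} : Set U) := Set.inter_subset_right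
      simpa using Set.ncard_le_ncard hsub (Set.toFinite ({x} : Set U))
    have := le_rkDual (R := R) (le_refl ({x} : Set U)) h1
    simpa using this

lemma rkDual_class (hx : R x x) : rkDual R {y : U | R x y} = 1 := by
  refine le_antisymm (rkDual_le fun I hIA hI => ?_) ?_
  · have h := hI x
    rwa [Set.inter_eq_self_of_subset_right hIA] at h
  · have h1 : ∀ y : U, ({z : U | R y z} ∩ ({x} : Set U)).ncard ≤ 1 := fun y => by
      have hsub : {z : U | R y z} ∩ ({x} : Set U) ⊆ ({x} : Set U) := Set.inter_subset_right
      simpa using Set.ncard_le_ncard hsub (Set.toFinite ({x} : Set U))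
    have := le_rkDual (R := R) (Set.singleton_subset_iff.mpr hx) h1
    rwa [Set.ncard_singleton] at this

end Helpers

theorem stmt_14 {U : Type*} [Fintype U] [Nonempty U]
    (R : U → U → Prop) (hR : Equivalence R) (x : U)
    (X : Set U) (hX : X ⊆ {y : U | R x y}ᶜ) :
    rkDual R (X ∪ {x}) - rkDual R ({x} : Set U)
      = rkDual R (X ∪ {y : U | R x y}) - rkDual R {y : U | R x y} := by
  have hxx : R x x := hR.refl x
  have hxcls : x ∈ {y : U | R x y} := hxx
  have hsub : ({x} : Set U) ⊆ {y : U | R x y} := Set.singleton_subset_iff.mpr hxcls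
  have hmain : rkDual R (X ∪ {x}) = rkDual R (X ∪ {y : U | R x y}) := by
    refine le_antisymm (rkDual_mono (Set.union_subset_union_right _ hsub)) ?_
    refine rkDual_le fun I hIA hI => ?_
    by_cases hIc : ({y : U | R x y} ∩ I) = ∅
    · -- I avoids the class, so I ⊆ X ⊆ X ∪ {x}
      refine le_rkDual (fun z hz => ?_) hI
      rcases hIA hz with h | h
      · exact Or.inl h
      · exact absurd (Set.mem_inter h hz) (by simp [hIc])
    · obtain ⟨a, ha⟩ := Set.nonempty_iff_ne_empty.mpr hIc
      have hcard : ({y : U | R x y} ∩ I).ncard ≤ 1 := hI x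
      have hsingle : {y : U | R x y} ∩ I = {a} := by
        refine Set.eq_singleton_iff_unique_mem.mpr ⟨ha, fun b hb => ?_⟩
        by_contra hne
        have : ({b, a} : Set U) ⊆ {y : U | R x y} ∩ I := by
          rintro c (rfl | rfl) <;> assumption
        have h2 : (2 : ℕ) ≤ ({y : U | R x y} ∩ I).ncard := by
          have := Set.ncard_le_ncard this (Set.toFinite _)
          rwa [Set.ncard_pair hne] at this
        omega
      set I' : Set U := insert x (I \ {a}) with hI'
      have haI : a ∈ I := ha.2
      have hxnot : x ∉ I \ {a} := by
        rintro ⟨hxI, hxa⟩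
        exact hxa (by
          have : x ∈ {y : U | R x y} ∩ I := ⟨hxcls, hxI⟩
          rw [hsingle] at this; exact this)
      have hcardI' : I'.ncard = I.ncard := by
        rw [hI', Set.ncard_insert_of_notMem hxnot (Set.toFinite _),
          Set.ncard_diff_singleton_of_mem haI]
        have : 0 < I.ncard := (Set.ncard_pos (Set.toFinite _)).mpr ⟨a, haI⟩
        omega
      have hI'A : I' ⊆ X ∪ {x} := by
        rintro z (rfl | ⟨hzI, hza⟩)
        · exact Or.inr rfl
        · rcases hIA hzI with h | h
          · exact Or.inl h
          · exact absurd (hsingle ▸ Set.mem_inter h hzI : z ∈ ({a} : Set U)) hza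
      have hI'ind : ∀ y : U, ({z : U | R y z} ∩ I').ncard ≤ 1 := by
        intro y
        by_cases hyx : R y x
        · have hcls : {z : U | R y z} = {z : U | R x z} := by
            ext z
            exact ⟨fun h => hR.trans (hR.symm hyx) h, fun h => hR.trans hyx h⟩
          have : {z : U | R y z} ∩ I' ⊆ {x} := by
            rw [hcls, hI']
            rintro z ⟨hz, (rfl | ⟨hzI, hza⟩)⟩
            · rfl
            · exact absurd (hsingle ▸ Set.mem_inter hz hzI : z ∈ ({a} : Set U)) hza
          simpa using Set.ncard_le_ncard this (Set.toFinite _)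
        · have hxnot' : x ∉ {z : U | R y z} := hyx
          have hanot : a ∉ {z : U | R y z} := by
            intro hya
            have hxa : R x a := (hsingle ▸ ha : a ∈ ({a} : Set U)) |> fun _ => ha.1
            exact hyx (hR.trans hya (hR.symm hxa))
          have : {z : U | R y z} ∩ I' = {z : U | R y z} ∩ I := by
            rw [hI']
            ext z
            constructor
            · rintro ⟨hz, (rfl | ⟨hzI, -⟩)⟩
              · exact absurd hz hxnot'
              · exact ⟨hz, hzI⟩
            · rintro ⟨hz, hzI⟩
              refine ⟨hz, Or.inr ⟨hzI, ?_⟩⟩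
              rintro rfl
              exact hanot hz
          rw [this]; exact hI y
      calc I.ncard = I'.ncard := hcardI'.symm
        _ ≤ rkDual R (X ∪ {x}) := le_rkDual hI'A hI'ind
  rw [hmain, rkDual_singleton_of_refl hxx, rkDual_class hxx]
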